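/- Assume A_n → A almost everywhere on Ω and u_n ⇀ u weakly in L²(μ; ℝ^d). Then the quadratic energy is weakly lower semicontinuous along the sequence: ∫_Ω ⟨A(x)u(x), u(x)⟩ dμ(x) ≤ liminf_{n→∞} ∫_Ω ⟨A_n(x)u_n(x), u_n(x)⟩ dμ(x). -/

import Mathlib

open MeasureTheory Matrix Filter

lemma cauchy_dot (d : ℕ) (x y : Fin d → ℝ) : |x ⬝ᵥ y| ≤ ((x ⬝ᵥ x) + (y ⬝ᵥ y))/2 := by
  have h1 : 0 ≤ (x - y) ⬝ᵥ (x - y) := Finset.sum_nonneg fun i _ => mul_self_nonneg _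
  have h2 : 0 ≤ (x + y) ⬝ᵥ (x + y) := Finset.sum_nonneg fun i _ => mul_self_nonneg _
  rw [sub_dotProduct, dotProduct_sub, dotProduct_sub] at h1
  rw [add_dotProduct, dotProduct_add, dotProduct_add] at h2
  have hc : x ⬝ᵥ y = y ⬝ᵥ x := dotProduct_comm _ _
  rw [abs_le]
  constructor <;> nlinarith



lemma entry_bound {d : ℕ} (M : Matrix (Fin d) (Fin d) ℝ) (K : ℝ) (hK : 0 ≤ K)
    (hs : M.IsSymm) (h : ∀ ξ : Fin d → ℝ, |ξ ⬝ᵥ (M *ᵥ ξ)| ≤ K * (ξ ⬝ᵥ ξ)) (i j : Fin d) :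
    |M i j| ≤ 2 * K := by
  have diag : ∀ i : Fin d, |M i i| ≤ K := by
    intro i
    have := h (Pi.single i 1)
    simpa [Matrix.mulVec_single, dotProduct_single, single_dotProduct] using this
  rcases eq_or_ne i j with rfl | hij
  · exact (diag i).trans (by linarith)
  · have := h (Pi.single i 1 + Pi.single j 1)
    rw [Matrix.mulVec_add, dotProduct_add, add_dotProduct, add_dotProduct] at this
    simp [Matrix.mulVec_single, dotProduct_single, single_dotProduct,
      Pi.single_apply, hij, hij.symm] at this
    have hMji : M j i = M i j := hs.apply i j
    have h1 := diag i
    have h2 := diag j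
    rw [abs_le] at *
    constructor <;> nlinarith [this.1, this.2, h1.1, h1.2, h2.1, h2.2]

lemma mulVec_sq_bound {d : ℕ} (M : Matrix (Fin d) (Fin d) ℝ) (K : ℝ) (hK : 0 ≤ K)
    (hs : M.IsSymm) (h : ∀ ξ : Fin d → ℝ, |ξ ⬝ᵥ (M *ᵥ ξ)| ≤ K * (ξ ⬝ᵥ ξ)) (ξ : Fin d → ℝ) :
    (M *ᵥ ξ) ⬝ᵥ (M *ᵥ ξ) ≤ (2 * K * d)^2 * (ξ ⬝ᵥ ξ) := by
  have hentry := entry_bound M K hK hs h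
  have hcomp : ∀ i : Fin d, ((M *ᵥ ξ) i)^2 ≤ (2*K)^2 * d * (ξ ⬝ᵥ ξ) := by
    intro i
    have h1 : ((M *ᵥ ξ) i)^2 ≤ (d : ℝ) * ∑ j, (M i j * ξ j)^2 := by
      have := sq_sum_le_card_mul_sum_sq (s := Finset.univ) (f := fun j => M i j * ξ j)
      simpa [Matrix.mulVec, dotProduct] using this
    have h2 : ∑ j, (M i j * ξ j)^2 ≤ ∑ j, (2*K)^2 * (ξ j)^2 := by
      apply Finset.sum_le_sum
      intro j _
      rw [mul_pow]
      apply mul_le_mul_of_nonneg_right _ (sq_nonneg _)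
      rw [← sq_abs (M i j)]
      exact pow_le_pow_left₀ (abs_nonneg _) (hentry i j) 2
    have h3 : ∑ j, (2*K)^2 * (ξ j)^2 = (2*K)^2 * (ξ ⬝ᵥ ξ) := by
      rw [← Finset.mul_sum]; congr 1; simp [dotProduct, sq]
    calc ((M *ᵥ ξ) i)^2 ≤ (d : ℝ) * ∑ j, (M i j * ξ j)^2 := h1
      _ ≤ (d : ℝ) * ((2*K)^2 * (ξ ⬝ᵥ ξ)) := by
          apply mul_le_mul_of_nonneg_left _ (Nat.cast_nonneg d); rw [← h3]; exact h2
      _ = (2*K)^2 * d * (ξ ⬝ᵥ ξ) := by ring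
  calc (M *ᵥ ξ) ⬝ᵥ (M *ᵥ ξ) = ∑ i, ((M *ᵥ ξ) i)^2 := by simp [dotProduct, sq]
    _ ≤ ∑ _i : Fin d, (2*K)^2 * d * (ξ ⬝ᵥ ξ) := Finset.sum_le_sum fun i _ => hcomp i
    _ = (2 * K * d)^2 * (ξ ⬝ᵥ ξ) := by simp [Finset.sum_const]; ring


lemma weak_bounded {Ω : Type*} [MeasurableSpace Ω] (μ : Measure Ω) (d : ℕ)
    (u : ℕ → Ω → Fin d → ℝ) (ulim : Ω → Fin d → ℝ)
    (humeas : ∀ n, Measurable (u n))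
    (huL2 : ∀ n, Integrable (fun x => u n x ⬝ᵥ u n x) μ)
    (hweak : ∀ v : Ω → Fin d → ℝ, Measurable v → Integrable (fun x => v x ⬝ᵥ v x) μ →
      Tendsto (fun n => ∫ x, u n x ⬝ᵥ v x ∂μ) atTop (nhds (∫ x, ulim x ⬝ᵥ v x ∂μ))) :
    ∃ C : ℝ, ∀ n, ∫ x, u n x ⬝ᵥ u n x ∂μ ≤ C := by
  classical
  set eq : EuclideanSpace ℝ (Fin d) ≃ᵐ (Fin d → ℝ) := (MeasurableEquiv.toLp 2 (Fin d → ℝ)).symm with heq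
  set U : ℕ → Ω → EuclideanSpace ℝ (Fin d) := fun n x => eq.symm (u n x) with hU
  have hUmeas : ∀ n, Measurable (U n) := fun n => eq.symm.measurable.comp (humeas n)
  have hnormsq : ∀ (y : EuclideanSpace ℝ (Fin d)), ‖y‖^2 = (eq y) ⬝ᵥ (eq y) := by
    intro y
    rw [EuclideanSpace.norm_eq, Real.sq_sqrt (Finset.sum_nonneg fun i _ => sq_nonneg _)]
    simp [dotProduct, sq, heq, MeasurableEquiv.coe_toLp_symm]
  have hmem : ∀ n, MemLp (U n) 2 μ := by
    intro n
    rw [memLp_two_iff_integrable_sq_norm (hUmeas n).aestronglyMeasurable]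
    have : (fun x => ‖U n x‖^2) = fun x => u n x ⬝ᵥ u n x := by
      funext x; rw [hnormsq]; simp [hU]
    rw [this]; exact huL2 n
  set f : ℕ → Lp (EuclideanSpace ℝ (Fin d)) 2 μ := fun n => (hmem n).toLp (U n) with hf
  set φ : ℕ → (Lp (EuclideanSpace ℝ (Fin d)) 2 μ) →L[ℝ] ℝ := fun n => innerSL ℝ (f n) with hφ
  have hinner : ∀ (y z : EuclideanSpace ℝ (Fin d)), @inner ℝ _ _ y z = (eq y) ⬝ᵥ (eq z) := by
    intro y z
    simp [PiLp.inner_apply, dotProduct, heq, MeasurableEquiv.coe_toLp_symm, RCLike.inner_apply, mul_comm]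
  have key : ∀ n (g : Lp (EuclideanSpace ℝ (Fin d)) 2 μ) (v : Ω → EuclideanSpace ℝ (Fin d)), (g : Ω → EuclideanSpace ℝ (Fin d)) =ᵐ[μ] v →
      φ n g = ∫ x, u n x ⬝ᵥ (eq (v x)) ∂μ := by
    intro n g v hv
    rw [hφ]
    simp only [innerSL_apply_apply]
    rw [L2.inner_def]
    apply integral_congr_ae
    filter_upwards [(hmem n).coeFn_toLp, hv] with x h1 h2
    rw [hf]; simp only []
    rw [h1, h2, hinner]
    simp [hU]
  have hptwise : ∀ g : Lp (EuclideanSpace ℝ (Fin d)) 2 μ, ∃ C, ∀ n, ‖φ n g‖ ≤ C := by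
    intro g
    have hg := Lp.aestronglyMeasurable g
    set v : Ω → EuclideanSpace ℝ (Fin d) := hg.mk g with hv
    have hvmeas : Measurable v := hg.stronglyMeasurable_mk.measurable
    have hveq : (g : Ω → EuclideanSpace ℝ (Fin d)) =ᵐ[μ] v := hg.ae_eq_mk
    set v' : Ω → Fin d → ℝ := fun x => eq (v x) with hv'
    have hv'meas : Measurable v' := eq.measurable.comp hvmeas
    have hv'int : Integrable (fun x => v' x ⬝ᵥ v' x) μ := by
      have hm : MemLp v 2 μ := (Lp.memLp g).ae_eq hveq
      have := (memLp_two_iff_integrable_sq_norm hvmeas.aestronglyMeasurable).mp hm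
      have heq2 : (fun x => ‖v x‖^2) = fun x => v' x ⬝ᵥ v' x := by
        funext x; rw [hnormsq]
      rwa [heq2] at this
    have hw := (hweak v' hv'meas hv'int).norm
    obtain ⟨C, hC⟩ := hw.bddAbove_range
    refine ⟨C, fun n => ?_⟩
    rw [key n g v hveq]
    exact hC ⟨n, rfl⟩
  obtain ⟨C', hC'⟩ := banach_steinhaus hptwise
  refine ⟨C'^2, fun n => ?_⟩
  have h1 : ∫ x, u n x ⬝ᵥ u n x ∂μ = ‖f n‖^2 := by
    rw [← real_inner_self_eq_norm_sq]
    rw [L2.inner_def]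
    apply integral_congr_ae
    filter_upwards [(hmem n).coeFn_toLp] with x h1
    rw [hf]; simp only []
    rw [h1, hinner]
    simp [hU]
  have h2 : ‖f n‖ ≤ C' := by
    have := hC' n
    rwa [hφ, innerSL_apply_norm] at this
  rw [h1]
  exact pow_le_pow_left₀ (norm_nonneg _) h2 2


lemma meas_dot {Ω : Type*} [MeasurableSpace Ω] {d : ℕ} {f g : Ω → Fin d → ℝ}
    (hf : ∀ i, Measurable fun x => f x i) (hg : ∀ i, Measurable fun x => g x i) :
    Measurable fun x => f x ⬝ᵥ g x := by
  simp only [dotProduct]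
  exact Finset.measurable_sum _ fun i _ => (hf i).mul (hg i)

lemma meas_mulVec {Ω : Type*} [MeasurableSpace Ω] {d : ℕ} {M : Ω → Matrix (Fin d) (Fin d) ℝ}
    {f : Ω → Fin d → ℝ} (hM : ∀ i j, Measurable fun x => M x i j)
    (hf : ∀ i, Measurable fun x => f x i) (i : Fin d) :
    Measurable fun x => (M x *ᵥ f x) i := by
  simp only [Matrix.mulVec, dotProduct]
  exact Finset.measurable_sum _ fun j _ => (hM i j).mul (hf j)

lemma cont_quad {d : ℕ} (a b : Fin d → ℝ) :
    Continuous fun M : Matrix (Fin d) (Fin d) ℝ => a ⬝ᵥ (M *ᵥ b) :=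
  (continuous_const (y := a)).dotProduct (continuous_id.matrix_mulVec continuous_const)

lemma cont_wsq {d : ℕ} (C : Matrix (Fin d) (Fin d) ℝ) (b : Fin d → ℝ) :
    Continuous fun M : Matrix (Fin d) (Fin d) ℝ =>
      ((M - C) *ᵥ b) ⬝ᵥ ((M - C) *ᵥ b) := by
  have h : Continuous fun M : Matrix (Fin d) (Fin d) ℝ => (M - C) *ᵥ b :=
    (continuous_id.sub continuous_const).matrix_mulVec continuous_const
  exact h.dotProduct h

lemma young_dot (d : ℕ) (ε : ℝ) (hε : 0 < ε) (x y : Fin d → ℝ) :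
    -(ε * (x ⬝ᵥ x)) - ε⁻¹ * (y ⬝ᵥ y) ≤ 2 * (x ⬝ᵥ y) := by
  have h1 : 0 ≤ (ε • x + y) ⬝ᵥ (ε • x + y) := Finset.sum_nonneg fun i _ => mul_self_nonneg _
  rw [add_dotProduct, dotProduct_add, dotProduct_add, smul_dotProduct, smul_dotProduct,
    dotProduct_smul, dotProduct_smul] at h1
  have hc : x ⬝ᵥ y = y ⬝ᵥ x := dotProduct_comm _ _
  simp only [smul_eq_mul] at h1
  have h2 : 0 ≤ ε⁻¹ := le_of_lt (inv_pos.2 hε)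
  have h3 : ε * ε⁻¹ = 1 := mul_inv_cancel₀ hε.ne'
  rw [hc] at h1
  set X := x ⬝ᵥ x with hX
  set P := y ⬝ᵥ x with hP
  set Y := y ⬝ᵥ y with hY
  rw [dotProduct_comm]
  rw [← hP]
  have h4 := mul_le_mul_of_nonneg_left h1 h2
  have h5 : ε⁻¹ * (ε * (ε * X) + ε * P + (ε * P + Y)) = ε * X + 2 * P + ε⁻¹ * Y := by
    field_simp; ring
  rw [mul_zero, h5] at h4
  linarith

lemma key_ineq {d : ℕ} (k₀ ε : ℝ) (hk₀ : 0 < k₀) (hε : 0 < ε)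
    (B C : Matrix (Fin d) (Fin d) ℝ) (hB : B.IsSymm)
    (hBell : ∀ ξ : Fin d → ℝ, k₀ * (ξ ⬝ᵥ ξ) ≤ ξ ⬝ᵥ (B *ᵥ ξ)) (v U : Fin d → ℝ) :
    2 * (v ⬝ᵥ (C *ᵥ U)) - ε⁻¹ * (((B - C) *ᵥ U) ⬝ᵥ ((B - C) *ᵥ U)) - (U ⬝ᵥ (B *ᵥ U))
      ≤ (1 + ε / k₀) * (v ⬝ᵥ (B *ᵥ v)) := by
  set w := (B - C) *ᵥ U with hw
  have hCU : B *ᵥ U = C *ᵥ U + w := by rw [hw, Matrix.sub_mulVec]; abel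
  have hflip : U ⬝ᵥ (B *ᵥ v) = v ⬝ᵥ (B *ᵥ U) := by
    rw [dotProduct_mulVec]
    conv_lhs => rw [← hB.eq]
    rw [Matrix.vecMul_transpose, dotProduct_comm]
  have h0 : 0 ≤ (v - U) ⬝ᵥ (B *ᵥ (v - U)) := by
    have h1 := hBell (v - U)
    have h2 : 0 ≤ (v - U) ⬝ᵥ (v - U) := Finset.sum_nonneg fun _ _ => mul_self_nonneg _
    nlinarith
  rw [Matrix.mulVec_sub, dotProduct_sub, sub_dotProduct, sub_dotProduct, hflip] at h0
  rw [hCU, dotProduct_add, dotProduct_add] at h0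
  rw [hCU, dotProduct_add]
  have hyoung := young_dot d ε hε v w
  have hell := hBell v
  have hX : 0 ≤ v ⬝ᵥ v := Finset.sum_nonneg fun _ _ => mul_self_nonneg _
  have h6 : ε * (v ⬝ᵥ v) ≤ ε / k₀ * (v ⬝ᵥ (B *ᵥ v)) := by
    rw [div_mul_eq_mul_div, le_div_iff₀ hk₀]
    calc ε * (v ⬝ᵥ v) * k₀ = ε * (k₀ * (v ⬝ᵥ v)) := by ring
      _ ≤ ε * (v ⬝ᵥ (B *ᵥ v)) := by nlinarith
      _ = ε * (v ⬝ᵥ (B *ᵥ v)) * 1 := by ring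
      _ ≤ _ := by norm_num
  linarith



/-- Weak lower semicontinuity of the quadratic energy: if `A_n, A` are
measurable, a.e. symmetric, uniformly elliptic and bounded matrix fields with `A_n → A`
a.e., and `u_n ⇀ u` weakly in `L²(μ; ℝ^d)`, then
`∫ ⟨A u, u⟩ dμ ≤ liminf_n ∫ ⟨A_n u_n, u_n⟩ dμ`. -/
theorem energy_weak_lower_semicontinuity
    (Ω : Type*) [MeasurableSpace Ω] (μ : Measure Ω) [SigmaFinite μ]
    (d : ℕ) (hd : 1 ≤ d) (k₀ k₁ : ℝ) (hk₀ : 0 < k₀) (hk : k₀ ≤ k₁)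
    (A : ℕ → Ω → Matrix (Fin d) (Fin d) ℝ) (Alim : Ω → Matrix (Fin d) (Fin d) ℝ)
    (hAmeas : ∀ n, ∀ i j, Measurable fun x => A n x i j)
    (hAlimmeas : ∀ i j, Measurable fun x => Alim x i j)
    (hsymm : ∀ᵐ x ∂μ, (∀ n, (A n x).IsSymm) ∧ (Alim x).IsSymm)
    (hellip : ∀ᵐ x ∂μ, ∀ ξ : Fin d → ℝ,
      (∀ n, k₀ * (ξ ⬝ᵥ ξ) ≤ ξ ⬝ᵥ ((A n x) *ᵥ ξ) ∧ ξ ⬝ᵥ ((A n x) *ᵥ ξ) ≤ k₁ * (ξ ⬝ᵥ ξ)) ∧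
        (k₀ * (ξ ⬝ᵥ ξ) ≤ ξ ⬝ᵥ ((Alim x) *ᵥ ξ) ∧ ξ ⬝ᵥ ((Alim x) *ᵥ ξ) ≤ k₁ * (ξ ⬝ᵥ ξ)))
    (hae : ∀ᵐ x ∂μ, Tendsto (fun n => A n x) atTop (nhds (Alim x)))
    (u : ℕ → Ω → Fin d → ℝ) (ulim : Ω → Fin d → ℝ)
    (humeas : ∀ n, Measurable (u n)) (hulimmeas : Measurable ulim)
    (huL2 : ∀ n, Integrable (fun x => u n x ⬝ᵥ u n x) μ)
    (hulimL2 : Integrable (fun x => ulim x ⬝ᵥ ulim x) μ)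
    (hweak : ∀ v : Ω → Fin d → ℝ, Measurable v → Integrable (fun x => v x ⬝ᵥ v x) μ →
      Tendsto (fun n => ∫ x, u n x ⬝ᵥ v x ∂μ) atTop (nhds (∫ x, ulim x ⬝ᵥ v x ∂μ))) :
    (∫ x, ulim x ⬝ᵥ ((Alim x) *ᵥ ulim x) ∂μ) ≤
      liminf (fun n => ∫ x, u n x ⬝ᵥ ((A n x) *ᵥ u n x) ∂μ) atTop := by
  classical
  have hk₁0 : (0:ℝ) ≤ k₁ := hk₀.le.trans hk
  set K2 : ℝ := (2 * k₁ * d)^2 with hK2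
  -- component measurability
  have hui : ∀ n i, Measurable fun x => u n x i :=
    fun n i => (measurable_pi_apply i).comp (humeas n)
  have huli : ∀ i, Measurable fun x => ulim x i :=
    fun i => (measurable_pi_apply i).comp hulimmeas
  set v : Ω → Fin d → ℝ := fun x => Alim x *ᵥ ulim x with hv
  have hvi : ∀ i, Measurable fun x => v x i := meas_mulVec hAlimmeas huli
  have hvmeas : Measurable v := measurable_pi_lambda _ hvi
  have hsubmeas : ∀ n i j, Measurable fun x => (A n x - Alim x) i j := by
    intro n i j
    exact (hAmeas n i j).sub (hAlimmeas i j)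
  have hwi : ∀ n i, Measurable fun x => ((A n x - Alim x) *ᵥ ulim x) i :=
    fun n => meas_mulVec (hsubmeas n) huli
  have hdotnn : ∀ (y : Fin d → ℝ), 0 ≤ y ⬝ᵥ y :=
    fun y => Finset.sum_nonneg fun _ _ => mul_self_nonneg _
  -- a.e. pointwise bounds
  have hbounds : ∀ᵐ x ∂μ,
      (∀ n, |u n x ⬝ᵥ (A n x *ᵥ u n x)| ≤ k₁ * (u n x ⬝ᵥ u n x)) ∧
      (v x ⬝ᵥ v x ≤ K2 * (ulim x ⬝ᵥ ulim x)) ∧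
      (∀ n, ((A n x - Alim x) *ᵥ ulim x) ⬝ᵥ ((A n x - Alim x) *ᵥ ulim x)
          ≤ K2 * (ulim x ⬝ᵥ ulim x)) ∧
      (∀ n, |ulim x ⬝ᵥ (A n x *ᵥ ulim x)| ≤ k₁ * (ulim x ⬝ᵥ ulim x)) := by
    filter_upwards [hsymm, hellip] with x hs he
    have habsA : ∀ n (ξ : Fin d → ℝ), |ξ ⬝ᵥ (A n x *ᵥ ξ)| ≤ k₁ * (ξ ⬝ᵥ ξ) := by
      intro n ξ
      have h1 := ((he ξ).1 n).1
      have h2 := ((he ξ).1 n).2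
      have h3 := hdotnn ξ
      rw [abs_le]; constructor <;> nlinarith
    have habsAl : ∀ (ξ : Fin d → ℝ), |ξ ⬝ᵥ (Alim x *ᵥ ξ)| ≤ k₁ * (ξ ⬝ᵥ ξ) := by
      intro ξ
      have h1 := (he ξ).2.1
      have h2 := (he ξ).2.2
      have h3 := hdotnn ξ
      rw [abs_le]; constructor <;> nlinarith
    refine ⟨fun n => habsA n (u n x), ?_, fun n => ?_, fun n => habsA n (ulim x)⟩
    · exact mulVec_sq_bound (Alim x) k₁ hk₁0 hs.2 habsAl (ulim x)
    · have hsymmsub : (A n x - Alim x).IsSymm := (hs.1 n).sub hs.2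
      have habssub : ∀ (ξ : Fin d → ℝ),
          |ξ ⬝ᵥ ((A n x - Alim x) *ᵥ ξ)| ≤ k₁ * (ξ ⬝ᵥ ξ) := by
        intro ξ
        rw [Matrix.sub_mulVec, dotProduct_sub]
        have h1 := ((he ξ).1 n).1
        have h2 := ((he ξ).1 n).2
        have h3 := (he ξ).2.1
        have h4 := (he ξ).2.2
        have h5 := hdotnn ξ
        rw [abs_le]; constructor <;> nlinarith
      exact mulVec_sq_bound _ k₁ hk₁0 hsymmsub habssub (ulim x)
  -- integrability
  have intf : ∀ n, Integrable (fun x => u n x ⬝ᵥ (A n x *ᵥ u n x)) μ := by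
    intro n
    refine Integrable.mono' ((huL2 n).const_mul k₁)
      (meas_dot (hui n) (meas_mulVec (hAmeas n) (hui n))).aestronglyMeasurable ?_
    filter_upwards [hbounds] with x hb
    simpa [Real.norm_eq_abs] using hb.1 n
  have intvv : Integrable (fun x => v x ⬝ᵥ v x) μ := by
    refine Integrable.mono' (hulimL2.const_mul K2)
      (meas_dot hvi hvi).aestronglyMeasurable ?_
    filter_upwards [hbounds] with x hb
    rw [Real.norm_eq_abs, abs_of_nonneg (hdotnn _)]
    exact hb.2.1
  have intg : ∀ n, Integrable (fun x => u n x ⬝ᵥ v x) μ := by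
    intro n
    refine Integrable.mono' (((huL2 n).add intvv).div_const 2)
      (meas_dot (hui n) hvi).aestronglyMeasurable ?_
    refine Eventually.of_forall fun x => ?_
    rw [Real.norm_eq_abs]
    exact cauchy_dot d _ _
  have intW : ∀ n, Integrable
      (fun x => ((A n x - Alim x) *ᵥ ulim x) ⬝ᵥ ((A n x - Alim x) *ᵥ ulim x)) μ := by
    intro n
    refine Integrable.mono' (hulimL2.const_mul K2)
      (meas_dot (hwi n) (hwi n)).aestronglyMeasurable ?_
    filter_upwards [hbounds] with x hb
    rw [Real.norm_eq_abs, abs_of_nonneg (hdotnn _)]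
    exact hb.2.2.1 n
  have intH : ∀ n, Integrable (fun x => ulim x ⬝ᵥ (A n x *ᵥ ulim x)) μ := by
    intro n
    refine Integrable.mono' (hulimL2.const_mul k₁)
      (meas_dot huli (meas_mulVec (hAmeas n) huli)).aestronglyMeasurable ?_
    filter_upwards [hbounds] with x hb
    simpa [Real.norm_eq_abs] using hb.2.2.2 n
  -- limits
  set E : ℝ := ∫ x, ulim x ⬝ᵥ (Alim x *ᵥ ulim x) ∂μ with hE
  have hG : Tendsto (fun n => ∫ x, u n x ⬝ᵥ v x ∂μ) atTop (nhds E) := hweak v hvmeas intvv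
  have hW : Tendsto
      (fun n => ∫ x, ((A n x - Alim x) *ᵥ ulim x) ⬝ᵥ ((A n x - Alim x) *ᵥ ulim x) ∂μ)
      atTop (nhds 0) := by
    have h0 : Tendsto
        (fun n => ∫ x, ((A n x - Alim x) *ᵥ ulim x) ⬝ᵥ ((A n x - Alim x) *ᵥ ulim x) ∂μ)
        atTop (nhds (∫ _x, (0:ℝ) ∂μ)) := by
      refine tendsto_integral_of_dominated_convergence
        (fun x => K2 * (ulim x ⬝ᵥ ulim x))
        (fun n => (meas_dot (hwi n) (hwi n)).aestronglyMeasurable)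
        (hulimL2.const_mul K2) (fun n => ?_) ?_
      · filter_upwards [hbounds] with x hb
        rw [Real.norm_eq_abs, abs_of_nonneg (hdotnn _)]
        exact hb.2.2.1 n
      · filter_upwards [hae] with x hx
        have hc := ((cont_wsq (Alim x) (ulim x)).tendsto (Alim x)).comp hx
        simpa [Function.comp_def] using hc
    simpa using h0
  have hH : Tendsto (fun n => ∫ x, ulim x ⬝ᵥ (A n x *ᵥ ulim x) ∂μ) atTop (nhds E) := by
    refine tendsto_integral_of_dominated_convergence
      (fun x => k₁ * (ulim x ⬝ᵥ ulim x))
      (fun n => (meas_dot huli (meas_mulVec (hAmeas n) huli)).aestronglyMeasurable)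
      (hulimL2.const_mul k₁) (fun n => ?_) ?_
    · filter_upwards [hbounds] with x hb
      simpa [Real.norm_eq_abs] using hb.2.2.2 n
    · filter_upwards [hae] with x hx
      exact ((cont_quad (ulim x) (ulim x)).tendsto (Alim x)).comp hx
  -- upper bound on the energies
  obtain ⟨C, hC⟩ := weak_bounded μ d u ulim humeas huL2 hweak
  have hIub : ∀ n, ∫ x, u n x ⬝ᵥ (A n x *ᵥ u n x) ∂μ ≤ k₁ * C := by
    intro n
    have h1 : ∫ x, u n x ⬝ᵥ (A n x *ᵥ u n x) ∂μ ≤ ∫ x, k₁ * (u n x ⬝ᵥ u n x) ∂μ := by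
      refine integral_mono_ae (intf n) ((huL2 n).const_mul k₁) ?_
      filter_upwards [hbounds] with x hb
      exact (le_abs_self _).trans (hb.1 n)
    rw [integral_const_mul] at h1
    exact h1.trans (mul_le_mul_of_nonneg_left (hC n) hk₁0)
  have hIcb : IsCoboundedUnder (· ≥ ·) atTop
      (fun n => ∫ x, u n x ⬝ᵥ (A n x *ᵥ u n x) ∂μ) :=
    isCoboundedUnder_ge_of_eventually_le atTop (Eventually.of_forall hIub)
  -- the ε-argument
  have main : ∀ ε : ℝ, 0 < ε →
      E / (1 + ε / k₀) ≤ liminf (fun n => ∫ x, u n x ⬝ᵥ (A n x *ᵥ u n x) ∂μ) atTop := by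
    intro ε hε
    have hc : (0:ℝ) < 1 + ε / k₀ := by positivity
    have hmono : ∀ n,
        2 * (∫ x, u n x ⬝ᵥ v x ∂μ)
          - ε⁻¹ * (∫ x, ((A n x - Alim x) *ᵥ ulim x) ⬝ᵥ ((A n x - Alim x) *ᵥ ulim x) ∂μ)
          - (∫ x, ulim x ⬝ᵥ (A n x *ᵥ ulim x) ∂μ)
        ≤ (1 + ε / k₀) * (∫ x, u n x ⬝ᵥ (A n x *ᵥ u n x) ∂μ) := by
      intro n
      have i1 : Integrable (fun x => 2 * (u n x ⬝ᵥ v x)) μ := (intg n).const_mul 2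
      have i2 : Integrable (fun x =>
          ε⁻¹ * (((A n x - Alim x) *ᵥ ulim x) ⬝ᵥ ((A n x - Alim x) *ᵥ ulim x))) μ :=
        (intW n).const_mul ε⁻¹
      have i12 : Integrable (fun x => 2 * (u n x ⬝ᵥ v x)
          - ε⁻¹ * (((A n x - Alim x) *ᵥ ulim x) ⬝ᵥ ((A n x - Alim x) *ᵥ ulim x))) μ :=
        i1.sub i2
      have hint1 : Integrable (fun x => 2 * (u n x ⬝ᵥ v x)
          - ε⁻¹ * (((A n x - Alim x) *ᵥ ulim x) ⬝ᵥ ((A n x - Alim x) *ᵥ ulim x))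
          - (ulim x ⬝ᵥ (A n x *ᵥ ulim x))) μ := i12.sub (intH n)
      have hineq := integral_mono_ae hint1 ((intf n).const_mul (1 + ε / k₀)) ?_
      · rw [integral_sub i12 (intH n), integral_sub i1 i2,
          integral_const_mul, integral_const_mul, integral_const_mul] at hineq
        exact hineq
      · filter_upwards [hsymm, hellip] with x hs he
        exact key_ineq k₀ ε hk₀ hε (A n x) (Alim x) (hs.1 n)
          (fun ξ => ((he ξ).1 n).1) (u n x) (ulim x)
    have hRlim : Tendsto (fun n =>
        (2 * (∫ x, u n x ⬝ᵥ v x ∂μ)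
          - ε⁻¹ * (∫ x, ((A n x - Alim x) *ᵥ ulim x) ⬝ᵥ ((A n x - Alim x) *ᵥ ulim x) ∂μ)
          - (∫ x, ulim x ⬝ᵥ (A n x *ᵥ ulim x) ∂μ)) / (1 + ε / k₀))
        atTop (nhds (E / (1 + ε / k₀))) := by
      have h1 := (((hG.const_mul 2).sub (hW.const_mul ε⁻¹)).sub hH).div_const (1 + ε / k₀)
      have h2 : (2 * E - ε⁻¹ * 0 - E) / (1 + ε / k₀) = E / (1 + ε / k₀) := by ring
      rw [h2] at h1
      exact h1
    have hle : ∀ n,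
        (2 * (∫ x, u n x ⬝ᵥ v x ∂μ)
          - ε⁻¹ * (∫ x, ((A n x - Alim x) *ᵥ ulim x) ⬝ᵥ ((A n x - Alim x) *ᵥ ulim x) ∂μ)
          - (∫ x, ulim x ⬝ᵥ (A n x *ᵥ ulim x) ∂μ)) / (1 + ε / k₀)
        ≤ ∫ x, u n x ⬝ᵥ (A n x *ᵥ u n x) ∂μ := by
      intro n
      rw [div_le_iff₀ hc]
      have := hmono n
      linarith
    calc E / (1 + ε / k₀)
        = liminf (fun n =>
        (2 * (∫ x, u n x ⬝ᵥ v x ∂μ)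
          - ε⁻¹ * (∫ x, ((A n x - Alim x) *ᵥ ulim x) ⬝ᵥ ((A n x - Alim x) *ᵥ ulim x) ∂μ)
          - (∫ x, ulim x ⬝ᵥ (A n x *ᵥ ulim x) ∂μ)) / (1 + ε / k₀)) atTop := hRlim.liminf_eq.symm
      _ ≤ liminf (fun n => ∫ x, u n x ⬝ᵥ (A n x *ᵥ u n x) ∂μ) atTop :=
          liminf_le_liminf (Eventually.of_forall hle) hRlim.isBoundedUnder_ge hIcb
  -- let ε → 0⁺
  have hfin : Tendsto (fun ε : ℝ => E / (1 + ε / k₀)) (nhdsWithin 0 (Set.Ioi 0)) (nhds E) := by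
    have h1 : Tendsto (fun ε : ℝ => E / (1 + ε / k₀)) (nhds 0) (nhds (E / (1 + 0 / k₀))) := by
      refine Tendsto.div tendsto_const_nhds
        (tendsto_const_nhds.add (tendsto_id.div_const k₀)) ?_
      norm_num
    have h2 := h1.mono_left (nhdsWithin_le_nhds (s := Set.Ioi (0:ℝ)))
    norm_num at h2
    exact h2
  refine le_of_tendsto hfin ?_
  filter_upwards [self_mem_nhdsWithin] with ε hε
  exact main ε hε
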